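/- Let N ≥ 2, R > 0 and ε > 0. Let E ⊂ ℝ^N be a linear subspace with dim E = N − 1, let U ⊂ E be an open set contained in the open ball of radius R centred at 0, and let φ : U → E^⊥ (the orthogonal complement of E) be Lipschitz with constant ε. Let Γ = { x + φ(x) : x ∈ U } ⊂ ℝ^N. Then there is a constant C > 0, depending only on N, R and ε (and not on Γ, A or r), such that for every affine subspace A of ℝ^N with d := dim A ≤ N − 1 and every r > 0, the (N−1)-dimensional Hausdorff measure satisfies H^{N−1}( Γ ∩ { y ∈ ℝ^N : dist(y, A) < r } ) ≤ C · r^{N − d − 1}. -/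

import Mathlib

open MeasureTheory Metric Set NNReal
open scoped ENNReal

lemma lipschitz_pi_to_euclidean {ι : Type*} [Fintype ι] :
    LipschitzWith ((Fintype.card ι : ℝ≥0) ^ ((1 / (2 : ℝ≥0∞)).toReal))
      ((WithLp.equiv 2 (∀ _ : ι, ℝ)).symm) := fun x y => by
  simpa using (PiLp.antilipschitzWith_ofLp 2 (fun _ : ι => ℝ))
      ((WithLp.equiv 2 _).symm x) ((WithLp.equiv 2 _).symm y)

lemma euclidean_box_measure_le {ι : Type*} [Fintype ι] (g bd : ι → ℝ) (hbd : ∀ i, 0 ≤ bd i) :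
    μH[(Fintype.card ι : ℝ)] {y : EuclideanSpace ℝ ι | ∀ i, |y i - g i| ≤ bd i}
      ≤ ENNReal.ofReal
          (Real.sqrt (Fintype.card ι) ^ (Fintype.card ι) * ∏ i, (2 * bd i)) := by
  classical
  set L := (WithLp.equiv 2 (∀ _ : ι, ℝ)).symm with hL
  have hsub : {y : EuclideanSpace ℝ ι | ∀ i, |y i - g i| ≤ bd i}
      ⊆ L '' (Set.univ.pi fun i => Icc (g i - bd i) (g i + bd i)) := by
    intro y hy
    refine ⟨WithLp.equiv 2 _ y, fun i _ => ?_, (WithLp.equiv 2 _).symm_apply_apply y⟩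
    have := hy i
    rw [abs_le] at this
    constructor <;> simp <;> linarith [this.1, this.2]
  have h2 : (((Fintype.card ι : ℝ≥0) ^ ((1 / (2 : ℝ≥0∞)).toReal) : ℝ≥0) : ℝ≥0∞)
        ^ ((Fintype.card ι : ℕ) : ℝ)
      = ENNReal.ofReal (Real.sqrt (Fintype.card ι) ^ (Fintype.card ι)) := by
    rw [ENNReal.rpow_natCast, ← ENNReal.coe_pow, ENNReal.ofReal]
    congr 1
    rw [← NNReal.coe_inj]
    rw [Real.coe_toNNReal _ (by positivity : (0:ℝ) ≤ Real.sqrt (Fintype.card ι) ^ (Fintype.card ι))]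
    rw [NNReal.coe_pow, NNReal.coe_rpow, NNReal.coe_natCast, Real.sqrt_eq_rpow]
    norm_num
  calc μH[((Fintype.card ι : ℕ) : ℝ)] {y : EuclideanSpace ℝ ι | ∀ i, |y i - g i| ≤ bd i}
      ≤ μH[((Fintype.card ι : ℕ) : ℝ)]
          (L '' (Set.univ.pi fun i => Icc (g i - bd i) (g i + bd i))) :=
        measure_mono hsub
    _ ≤ (((Fintype.card ι : ℝ≥0) ^ ((1 / (2 : ℝ≥0∞)).toReal) : ℝ≥0) : ℝ≥0∞)
            ^ ((Fintype.card ι : ℕ) : ℝ) *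
          μH[((Fintype.card ι : ℕ) : ℝ)]
            (Set.univ.pi fun i => Icc (g i - bd i) (g i + bd i)) :=
        lipschitz_pi_to_euclidean.hausdorffMeasure_image_le (by positivity) _
    _ ≤ ENNReal.ofReal
          (Real.sqrt (Fintype.card ι) ^ (Fintype.card ι) * ∏ i, (2 * bd i)) := by
        rw [hausdorffMeasure_pi_real, volume_pi_pi]
        have h1 : ∀ i, volume (Icc (g i - bd i) (g i + bd i))
            = ENNReal.ofReal (2 * bd i) := by
          intro i
          rw [Real.volume_Icc]
          congr 1
          ring
        simp_rw [h1]
        rw [← ENNReal.ofReal_prod_of_nonneg (fun i _ => by have := hbd i; positivity), h2,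
          ← ENNReal.ofReal_mul (by positivity)]

lemma exists_adapted_onb {F : Type*} [NormedAddCommGroup F] [InnerProductSpace ℝ F]
    [FiniteDimensional ℝ F] (W : Submodule ℝ F) :
    ∃ b : OrthonormalBasis (Fin (Module.finrank ℝ W) ⊕ Fin (Module.finrank ℝ Wᗮ)) ℝ F,
      (∀ i, b (Sum.inl i) ∈ W) ∧ ∀ j, b (Sum.inr j) ∈ Wᗮ := by
  classical
  set bW := stdOrthonormalBasis ℝ W
  set bQ := stdOrthonormalBasis ℝ Wᗮ
  set v : Fin (Module.finrank ℝ W) ⊕ Fin (Module.finrank ℝ Wᗮ) → F :=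
    Sum.elim (fun i => (bW i : F)) (fun j => (bQ j : F)) with hv
  have hmemW : ∀ i, v (Sum.inl i) ∈ W := fun i => (bW i).2
  have hmemQ : ∀ j, v (Sum.inr j) ∈ Wᗮ := fun j => (bQ j).2
  have hon : Orthonormal ℝ v := by
    rw [orthonormal_iff_ite]
    rintro (i | i) (j | j)
    · have := orthonormal_iff_ite.mp bW.orthonormal i j
      simpa [v, Submodule.coe_inner] using this
    · simp only [Sum.elim_inl, Sum.elim_inr, v]
      rw [Submodule.inner_right_of_mem_orthogonal (bW i).2 (bQ j).2]
      simp
    · simp only [Sum.elim_inl, Sum.elim_inr, v]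
      rw [Submodule.inner_left_of_mem_orthogonal (bW j).2 (bQ i).2]
      simp
    · have := orthonormal_iff_ite.mp bQ.orthonormal i j
      simpa [v, Submodule.coe_inner] using this
  have hsp : ⊤ ≤ Submodule.span ℝ (Set.range v) := by
    rw [hv, Set.Sum.elim_range, Submodule.span_union]
    have h1 : Submodule.span ℝ (Set.range fun i => (bW i : F)) = W := by
      have : (Set.range fun i => (bW i : F)) = W.subtype '' Set.range bW := by
        rw [← Set.range_comp]; rfl
      rw [this, Submodule.span_image, show Set.range ⇑bW = Set.range ⇑bW.toBasis by
        rw [bW.coe_toBasis], bW.toBasis.span_eq]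
      simp
    have h2 : Submodule.span ℝ (Set.range fun j => (bQ j : F)) = Wᗮ := by
      have : (Set.range fun j => (bQ j : F)) = Wᗮ.subtype '' Set.range bQ := by
        rw [← Set.range_comp]; rfl
      rw [this, Submodule.span_image, show Set.range ⇑bQ = Set.range ⇑bQ.toBasis by
        rw [bQ.coe_toBasis], bQ.toBasis.span_eq]
      simp
    rw [h1, h2, Submodule.sup_orthogonal_of_hasOrthogonalProjection]
  refine ⟨OrthonormalBasis.mk hon hsp, ?_, ?_⟩ <;>
    · intro i
      rw [OrthonormalBasis.coe_mk]
      first | exact hmemW i | exact hmemQ i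

open scoped RealInnerProductSpace

set_option maxHeartbeats 2000000 in
/-- A single ε-Lipschitz patch `Γ` over an open subset `U` of a hyperplane
`E ⊂ ℝ^N`, with `U` contained in the ball of radius `R`, satisfies the tube estimate
`H^{N-1}(Γ ∩ B(A, r)) ≤ C r^{N - dim A - 1}` for every affine subspace `A` and `r > 0`,
with `C` depending only on `N`, `R`, `ε`. -/
theorem patch_tube_measure_bound (N : ℕ) (hN : 2 ≤ N) (R : ℝ) (hR : 0 < R)
    (ε : ℝ≥0) (hε : 0 < ε) :
    ∃ C : ℝ, 0 < C ∧
      ∀ (E : Submodule ℝ (EuclideanSpace ℝ (Fin N))),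
        Module.finrank ℝ E = N - 1 →
        ∀ (U : Set E), IsOpen U → (∀ u ∈ U, ‖u‖ < R) →
        ∀ (φ : E → Eᗮ), LipschitzOnWith ε φ U →
        ∀ (A : AffineSubspace ℝ (EuclideanSpace ℝ (Fin N))),
          (A : Set (EuclideanSpace ℝ (Fin N))).Nonempty →
          ∀ d : ℕ, Module.finrank ℝ A.direction = d → d ≤ N - 1 →
          ∀ r : ℝ, 0 < r →
            μH[(N : ℝ) - 1]
              ({x : EuclideanSpace ℝ (Fin N) |
                  ∃ u ∈ U, x = (u : EuclideanSpace ℝ (Fin N)) + (φ u : EuclideanSpace ℝ (Fin N))}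
                ∩ {y | infDist y (A : Set (EuclideanSpace ℝ (Fin N))) < r})
              ≤ ENNReal.ofReal (C * r ^ ((N : ℝ) - d - 1)) := by
  classical
  classical
  set n := N - 1 with hnd
  have hn1 : 1 ≤ n := by omega
  have hnR : (1:ℝ) ≤ (n:ℝ) := by exact_mod_cast hn1
  have hsqrt : (0:ℝ) < Real.sqrt n := Real.sqrt_pos.mpr (by linarith)
  refine ⟨((1 + (ε:ℝ)) * Real.sqrt n * (4*R+2)) ^ n, by positivity, ?_⟩
  intro E hE U hUopen hUR φ hφ A hA d hd hdn r hr
  have hNcast : (N:ℝ) - 1 = (n:ℝ) := by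
    rw [hnd, Nat.cast_sub (by omega : 1 ≤ N)]
    norm_num
  have hExp : (N:ℝ) - d - 1 = (n:ℝ) - d := by rw [← hNcast]; ring
  rw [hNcast, hExp]
  set e := (n:ℝ) - (d:ℝ) with he
  have he0 : 0 ≤ e := by
    have : (d:ℝ) ≤ (n:ℝ) := by exact_mod_cast hdn
    simp [he]; linarith
  -- the graph map
  set G : E → EuclideanSpace ℝ (Fin N) := fun u =>
    (u : EuclideanSpace ℝ (Fin N)) + (φ u : EuclideanSpace ℝ (Fin N)) with hG
  have hGlip : LipschitzOnWith (1 + ε) G U := by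
    rw [lipschitzOnWith_iff_dist_le_mul]
    intro x hx y hy
    have hφxy : ‖φ x - φ y‖ ≤ (ε:ℝ) * ‖x - y‖ := by
      have := lipschitzOnWith_iff_dist_le_mul.mp hφ x hx y hy
      simpa [dist_eq_norm] using this
    have hdiff : G x - G y = ((x - y : E) : EuclideanSpace ℝ (Fin N))
        + ((φ x - φ y : Eᗮ) : EuclideanSpace ℝ (Fin N)) := by
      simp only [hG]
      push_cast
      abel
    have hinner : ⟪((x - y : E) : EuclideanSpace ℝ (Fin N)),
        ((φ x - φ y : Eᗮ) : EuclideanSpace ℝ (Fin N))⟫ = 0 :=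
      Submodule.inner_right_of_mem_orthogonal (x - y).2 (φ x - φ y).2
    have hsq : ‖G x - G y‖ ^ 2 ≤ ((1 + (ε:ℝ)) * ‖x - y‖) ^ 2 := by
      rw [hdiff, norm_add_sq_real, hinner]
      simp only [Submodule.coe_norm]
      have h1 : ‖((x - y : E) : EuclideanSpace ℝ (Fin N))‖ = ‖x - y‖ := rfl
      have h2 : ‖((φ x - φ y : Eᗮ) : EuclideanSpace ℝ (Fin N))‖ = ‖φ x - φ y‖ := rfl
      rw [h1, h2]
      nlinarith [norm_nonneg (x - y), norm_nonneg (φ x - φ y), NNReal.coe_nonneg ε]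
    have hnn : (0:ℝ) ≤ (1 + (ε:ℝ)) * ‖x - y‖ := by positivity
    have := Real.sqrt_le_sqrt hsq
    rw [Real.sqrt_sq (norm_nonneg _), Real.sqrt_sq hnn] at this
    calc dist (G x) (G y) = ‖G x - G y‖ := dist_eq_norm _ _
      _ ≤ (1 + (ε:ℝ)) * ‖x - y‖ := this
      _ = ((1 + ε : ℝ≥0) : ℝ) * dist x y := by rw [dist_eq_norm]; push_cast; ring
  -- projection setup
  set P := E.orthogonalProjectionOnto with hPdef
  have hP1 : ∀ z : EuclideanSpace ℝ (Fin N), ‖P z‖ ≤ ‖z‖ := fun z => by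
    calc ‖P z‖ ≤ ‖(P : EuclideanSpace ℝ (Fin N) →L[ℝ] E)‖ * ‖z‖ := P.le_opNorm z
      _ ≤ 1 * ‖z‖ := by
          have := Submodule.orthogonalProjectionOnto_norm_le E
          gcongr
      _ = ‖z‖ := one_mul _
  have hPG : ∀ u : E, P (G u) = u := fun u => by
    simp only [hG]
    rw [map_add, Submodule.orthogonalProjectionOnto_mem_subspace_eq_self,
      Submodule.orthogonalProjectionOnto_apply_of_mem_orthogonal (φ u).2, add_zero]
  -- adapted basis
  set W : Submodule ℝ E := A.direction.map (P : EuclideanSpace ℝ (Fin N) →ₗ[ℝ] E) with hWdef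
  set k := Module.finrank ℝ W with hkdef
  set m := Module.finrank ℝ Wᗮ with hmdef
  have hkm : k + m = n := by
    rw [hkdef, hmdef, Submodule.finrank_add_finrank_orthogonal, hE]
  have hk : k ≤ d := by
    rw [hkdef, hWdef, ← hd]
    exact Submodule.finrank_map_le _ _
  obtain ⟨b, hbW, hbQ⟩ := exists_adapted_onb W
  have hcard : Fintype.card (Fin k ⊕ Fin m) = n := by simp [hkm]
  -- the preimage set
  set S := U ∩ G ⁻¹' {y : EuclideanSpace ℝ (Fin N) |
    infDist y (A : Set (EuclideanSpace ℝ (Fin N))) < r} with hSdef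
  have hΓT : {x : EuclideanSpace ℝ (Fin N) |
        ∃ u ∈ U, x = (u : EuclideanSpace ℝ (Fin N)) + (φ u : EuclideanSpace ℝ (Fin N))}
      ∩ {y | infDist y (A : Set (EuclideanSpace ℝ (Fin N))) < r} ⊆ G '' S := by
    rintro x ⟨⟨u, hu, rfl⟩, hx⟩
    exact ⟨u, ⟨hu, hx⟩, rfl⟩
  -- box bound machine
  have box_bound : ∀ (c : E) (bd : Fin k ⊕ Fin m → ℝ), (∀ i, 0 ≤ bd i) →
      (∀ u ∈ S, ∀ i, |⟪b i, u - c⟫| ≤ bd i) →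
      μH[(n:ℝ)] S ≤ ENNReal.ofReal (Real.sqrt n ^ n * ∏ i, (2 * bd i)) := by
    intro c bd hbd hmem
    set box := {y : EuclideanSpace ℝ (Fin k ⊕ Fin m) | ∀ i, |y i - b.repr c i| ≤ bd i}
      with hbox
    have hsub : S ⊆ ⇑b.repr ⁻¹' box := by
      intro u hu
      intro i
      have h1 : b.repr u i - b.repr c i = ⟪b i, u - c⟫ := by
        rw [← b.repr_apply_apply (u - c) i, map_sub]
        simp
      rw [h1]
      exact hmem u hu i
    calc μH[(n:ℝ)] S ≤ μH[(n:ℝ)] (⇑b.repr ⁻¹' box) := measure_mono hsub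
      _ = μH[(n:ℝ)] (box ∩ Set.range ⇑b.repr) :=
          b.repr.isometry.hausdorffMeasure_preimage (Or.inl (by positivity)) _
      _ ≤ μH[(n:ℝ)] box := measure_mono inter_subset_left
      _ ≤ ENNReal.ofReal (Real.sqrt n ^ n * ∏ i, (2 * bd i)) := by
          have := euclidean_box_measure_le (fun i => b.repr c i) bd hbd
          rw [hcard] at this
          exact this
  -- norm facts
  have hbnorm : ∀ i, ‖b i‖ = 1 := fun i => b.orthonormal.1 i
  have hU_S : ∀ u : E, u ∈ S → ‖u‖ < R := fun u hu => hUR u hu.1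
  have main : μH[(n:ℝ)] S ≤ ENNReal.ofReal (Real.sqrt n ^ n * ((4*R+2)^n * r ^ e)) := by
    rcases le_or_gt 1 r with hr1 | hr1
    · -- big r : crude box of radius R around 0
      have h1 : ∀ u ∈ S, ∀ i, |⟪b i, u - 0⟫| ≤ (fun _ : Fin (Module.finrank ℝ W) ⊕
          Fin (Module.finrank ℝ Wᗮ) => R) i := by
        intro u hu i
        rw [sub_zero]
        calc |⟪b i, u⟫| ≤ ‖b i‖ * ‖u‖ := abs_real_inner_le_norm _ _
          _ = ‖u‖ := by rw [hbnorm i, one_mul]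
          _ ≤ R := (hU_S u hu).le
      refine (box_bound 0 _ (fun _ => hR.le) h1).trans (ENNReal.ofReal_le_ofReal ?_)
      rw [Finset.prod_const]
      have hcard2 : (Finset.univ : Finset (Fin (Module.finrank ℝ W) ⊕
          Fin (Module.finrank ℝ Wᗮ))).card = n := by
        simpa using hcard
      rw [hcard2]
      have h3 : (1:ℝ) ≤ r ^ e := Real.one_le_rpow hr1 he0
      have h2 : (2*R)^n ≤ (4*R+2)^n * r ^ e := by
        calc (2*R)^n ≤ (4*R+2)^n := by gcongr <;> linarith
          _ = (4*R+2)^n * 1 := (mul_one _).symm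
          _ ≤ (4*R+2)^n * r ^ e := by
              have : (0:ℝ) ≤ (4*R+2)^n := by positivity
              nlinarith
      have : (0:ℝ) ≤ Real.sqrt n ^ n := by positivity
      nlinarith [pow_nonneg (by linarith : (0:ℝ) ≤ 2*R) n]
    · -- small r
      rcases S.eq_empty_or_nonempty with hSe | ⟨u₁, hu₁⟩
      · rw [hSe]
        simp only [measure_empty]
        exact zero_le
      obtain ⟨a₁, ha₁, hda₁⟩ := (Metric.infDist_lt_iff hA).mp hu₁.2
      have hPu : ∀ u : E, ∀ a ∈ (A : Set (EuclideanSpace ℝ (Fin N))),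
          dist (G u) a < r → ‖u - P a‖ < r := by
        intro u a _ hlt
        have h1 : u - P a = P (G u - a) := by rw [map_sub, hPG u]
        rw [h1]
        calc ‖P (G u - a)‖ ≤ ‖G u - a‖ := hP1 _
          _ < r := by rwa [← dist_eq_norm]
      set c : E := P a₁ with hc
      have hc_norm : ‖c‖ ≤ R + 1 := by
        have h1 : ‖u₁ - c‖ < r := hPu u₁ a₁ ha₁ hda₁
        have h2 : ‖u₁‖ < R := hU_S u₁ hu₁
        calc ‖c‖ = ‖u₁ - (u₁ - c)‖ := by congr 1; abel
          _ ≤ ‖u₁‖ + ‖u₁ - c‖ := norm_sub_le _ _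
          _ ≤ R + 1 := by linarith
      have hmem : ∀ u ∈ S, ∀ i, |⟪b i, u - c⟫| ≤
          Sum.elim (fun _ : Fin (Module.finrank ℝ W) => 2*R+1)
            (fun _ : Fin (Module.finrank ℝ Wᗮ) => r) i := by
        intro u hu i
        obtain ⟨a, ha, hda⟩ := (Metric.infDist_lt_iff hA).mp hu.2
        have hua : ‖u - P a‖ < r := hPu u a ha hda
        have hPaW : P a - c ∈ W := by
          rw [hc]
          have hsub1 : a - a₁ ∈ A.direction := by
            simpa using A.vsub_mem_direction ha ha₁
          have h2 : P a - P a₁ = P (a - a₁) := (map_sub _ _ _).symm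
          rw [h2, hWdef]
          exact Submodule.mem_map_of_mem hsub1
        cases i with
        | inl i =>
          simp only [Sum.elim_inl]
          calc |⟪b (Sum.inl i), u - c⟫| ≤ ‖b (Sum.inl i)‖ * ‖u - c‖ :=
                abs_real_inner_le_norm _ _
            _ = ‖u - c‖ := by rw [hbnorm, one_mul]
            _ ≤ ‖u‖ + ‖c‖ := norm_sub_le _ _
            _ ≤ 2*R+1 := by have := hU_S u hu; linarith
        | inr i =>
          simp only [Sum.elim_inr]
          have hdec : ⟪b (Sum.inr i), u - c⟫
              = ⟪b (Sum.inr i), u - P a⟫ + ⟪b (Sum.inr i), P a - c⟫ := by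
            rw [← inner_add_right]
            congr 1
            abel
          have hzero : ⟪b (Sum.inr i), P a - c⟫ = 0 :=
            Submodule.inner_left_of_mem_orthogonal hPaW (hbQ i)
          rw [hdec, hzero, add_zero]
          calc |⟪b (Sum.inr i), u - P a⟫| ≤ ‖b (Sum.inr i)‖ * ‖u - P a‖ :=
                abs_real_inner_le_norm _ _
            _ = ‖u - P a‖ := by rw [hbnorm, one_mul]
            _ ≤ r := hua.le
      have hbdnn : ∀ i, 0 ≤ Sum.elim (fun _ : Fin (Module.finrank ℝ W) => 2*R+1)
          (fun _ : Fin (Module.finrank ℝ Wᗮ) => r) i := by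
        rintro (i | i) <;> simp <;> linarith
      refine (box_bound c _ hbdnn hmem).trans (ENNReal.ofReal_le_ofReal ?_)
      have hprod : (∏ i, (2 * Sum.elim (fun _ : Fin (Module.finrank ℝ W) => 2*R+1)
            (fun _ : Fin (Module.finrank ℝ Wᗮ) => r) i))
          = (2*(2*R+1))^k * (2*r)^m := by
        rw [Fintype.prod_sum_type]
        simp [hkdef, hmdef]
      rw [hprod]
      have hrm : (2*(2*R+1))^k * (2*r)^m ≤ (4*R+2)^n * r ^ e := by
        have h1 : (2*r)^m ≤ (4*R+2)^m * r^m := by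
          rw [← mul_pow]
          gcongr
          linarith
        have h2 : r ^ m ≤ r ^ e := by
          rw [← Real.rpow_natCast r m]
          apply Real.rpow_le_rpow_of_exponent_ge hr hr1.le
          rw [he]
          have : n ≤ m + d := by omega
          have h3 : (n:ℝ) ≤ (m:ℝ) + (d:ℝ) := by exact_mod_cast this
          linarith
        have h4 : (2*(2*R+1)) = (4*R+2) := by ring
        rw [h4]
        calc (4*R+2)^k * (2*r)^m ≤ (4*R+2)^k * ((4*R+2)^m * r^m) := by
              have : (0:ℝ) ≤ (4*R+2)^k := by positivity
              nlinarith
          _ = (4*R+2)^(k+m) * r^m := by rw [pow_add]; ring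
          _ = (4*R+2)^n * r^m := by rw [hkm]
          _ ≤ (4*R+2)^n * r ^ e := by
              have : (0:ℝ) ≤ (4*R+2)^n := by positivity
              nlinarith
      have : (0:ℝ) ≤ Real.sqrt n ^ n := by positivity
      nlinarith [pow_nonneg (by linarith : (0:ℝ) ≤ 2*(2*R+1)) k,
        pow_nonneg (by linarith [hr.le] : (0:ℝ) ≤ 2*r) m,
        mul_nonneg (pow_nonneg (by linarith : (0:ℝ) ≤ 2*(2*R+1)) k)
          (pow_nonneg (by linarith [hr.le] : (0:ℝ) ≤ 2*r) m)]
  -- final assembly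
  refine le_trans (measure_mono hΓT) ?_
  calc μH[(n:ℝ)] (G '' S)
      ≤ ((1 + ε : ℝ≥0) : ℝ≥0∞) ^ ((n:ℕ):ℝ) * μH[(n:ℝ)] S :=
        (hGlip.mono inter_subset_left).hausdorffMeasure_image_le (by positivity)
    _ ≤ ((1 + ε : ℝ≥0) : ℝ≥0∞) ^ ((n:ℕ):ℝ) *
          ENNReal.ofReal (Real.sqrt n ^ n * ((4*R+2)^n * r ^ e)) :=
        mul_le_mul_right main _
    _ ≤ ENNReal.ofReal (((1 + (ε:ℝ)) * Real.sqrt n * (4*R+2)) ^ n * r ^ e) := by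
        rw [ENNReal.rpow_natCast, ← ENNReal.coe_pow, ← ENNReal.ofReal_coe_nnreal,
          ← ENNReal.ofReal_mul (by positivity)]
        apply ENNReal.ofReal_le_ofReal
        apply le_of_eq
        push_cast
        rw [mul_pow, mul_pow]
        ring
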